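/- arXiv:1607.02790 — 3 statements merged into one kernel-verified Lean document; each statement's English description precedes it below -/
import Mathlib

section
/- Hyper normalisation is natural in the set parameter for ordinary functions: for every function f : A → B and every ω ∈ D(Fin n × A), N(D(id × f)(ω)) = D(id × D(f))(N(ω)), where id × f : Fin n × A → Fin n × B and id × D(f) : Fin n × D(A) → Fin n × D(B). -/
open scoped ENNReal

noncomputable section

namespace HyperNorm

variable {A B : Type*} {n m : ℕ}

/-- `ω[i] = Σ_a ω(i,a)`. -/
def fmass (ω : PMF (Fin n × A)) (i : Fin n) : ℝ≥0∞ := ∑' a, ω (i, a)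

lemma tsum_fmass (ω : PMF (Fin n × A)) : ∑' i, fmass ω i = 1 := by
  simp only [fmass]
  rw [← ENNReal.tsum_prod']
  exact ω.tsum_coe

lemma fmass_ne_top (ω : PMF (Fin n × A)) (i : Fin n) : fmass ω i ≠ ⊤ := by
  apply ne_top_of_le_ne_top ENNReal.one_ne_top
  rw [← tsum_fmass ω]
  exact ENNReal.le_tsum i

/-- The first marginal `i ↦ ω[i]` as a distribution. -/
def fstM (ω : PMF (Fin n × A)) : PMF (Fin n) :=
  ⟨fun i => fmass ω i, ENNReal.summable.hasSum_iff.mpr (tsum_fmass ω)⟩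

/-- The normalised `i`-th component `ω_i(a) = ω(i,a)/ω[i]` (junk value if `ω[i] = 0`,
which never contributes to `hnorm` below since it is weighted by `ω[i] = 0`). -/
def ncond (ω : PMF (Fin n × A)) (i : Fin n) : PMF A :=
  if h : fmass ω i ≠ 0 then
    ⟨fun a => ω (i, a) / fmass ω i,
      ENNReal.summable.hasSum_iff.mpr (by
        simp only [div_eq_mul_inv]
        rw [ENNReal.tsum_mul_right, ← div_eq_mul_inv]
        exact ENNReal.div_self h (fmass_ne_top ω i))⟩
  else PMF.pure (ω.support_nonempty.some.2)

/-- Hyper normalisation `N(ω) = Σ_{i with ω[i] ≠ 0} ω[i]·η(i, ω_i)`. -/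
def hnorm (ω : PMF (Fin n × A)) : PMF (Fin n × PMF A) :=
  (fstM ω).bind fun i => PMF.pure (i, ncond ω i)

/-- Graph map `gr(f)(x)(y,x') = f(x)(y) if x' = x, else 0`. -/
def gr {X Y : Type*} (f : X → PMF Y) : X → PMF (Y × X) :=
  fun x => (f x).map fun y => (y, x)

open scoped Classical in
lemma map_apply' (f : A → B) (ω : PMF (Fin n × A)) (i : Fin n) (b : B) :
    (ω.map fun p => (p.1, f p.2)) (i, b) = ∑' a, if b = f a then ω (i, a) else 0 := by
  classical
  rw [PMF.map_apply, ENNReal.tsum_prod']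
  rw [tsum_eq_single i (by intro j hj; simp [Prod.ext_iff, hj.symm])]
  refine tsum_congr fun a => ?_
  simp [Prod.ext_iff]

lemma fmass_map (f : A → B) (ω : PMF (Fin n × A)) (i : Fin n) :
    fmass (ω.map fun p => (p.1, f p.2)) i = fmass ω i := by
  simp only [fmass, map_apply']
  rw [ENNReal.tsum_comm]
  refine tsum_congr fun a => ?_
  simp

open scoped Classical in
lemma ncond_map (f : A → B) (ω : PMF (Fin n × A)) (i : Fin n) (h : fmass ω i ≠ 0) :
    ncond (ω.map fun p => (p.1, f p.2)) i = (ncond ω i).map f := by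
  classical
  have h' : fmass (ω.map fun p => (p.1, f p.2)) i ≠ 0 := by rwa [fmass_map]
  ext b
  rw [PMF.map_apply]
  simp only [ncond]
  erw [dif_pos h, dif_pos h']
  show (ω.map fun p => (p.1, f p.2)) (i, b) / _ = ∑' a, if b = f a then ω (i, a) / fmass ω i else 0
  rw [map_apply', fmass_map, div_eq_mul_inv, ← ENNReal.tsum_mul_right]
  refine tsum_congr fun a => ?_
  split <;> simp [div_eq_mul_inv]

/-- naturality of `N` for ordinary functions:
`N(D(id × f)(ω)) = D(id × D(f))(N(ω))`. -/
theorem hnorm_natural (f : A → B) (ω : PMF (Fin n × A)) :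
    hnorm (ω.map fun p => (p.1, f p.2)) = (hnorm ω).map fun p => (p.1, p.2.map f) := by
  have hfst : fstM (ω.map fun p => (p.1, f p.2)) = fstM ω := by
    ext i
    exact fmass_map f ω i
  ext x
  rw [hnorm, hnorm, PMF.map_bind, hfst]
  simp only [PMF.bind_apply, PMF.pure_map]
  refine tsum_congr fun i => ?_
  by_cases h : fmass ω i = 0
  · have : fstM ω i = 0 := h
    simp [this]
  · rw [ncond_map f ω i h]

end HyperNorm
end
end

section
/- Equational characterisation of hyper normalisation: let A be a nonempty finite type and n : ℕ. The hyper normalisation N is the unique function h : D(Fin n × A) → D(Fin n × D(A)) with the following property: for every r ∈ D(Fin n) and every family φ : Fin n → D(A), h applied to the distribution (i,a) ↦ r(i)·φ(i)(a) equals the distribution Σ_i r(i)·η(i, φ(i)). In particular N itself satisfies this equation. -/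
open scoped ENNReal

noncomputable section

namespace HyperNorm

variable {A B : Type*} {n m : ℕ}

lemma fstM_apply (ω : PMF (Fin n × A)) (i : Fin n) : fstM ω i = fmass ω i := rfl

lemma ncond_apply (ω : PMF (Fin n × A)) (i : Fin n) (h : fmass ω i ≠ 0) (a : A) :
    ncond ω i a = ω (i, a) / fmass ω i := by
  rw [show ncond ω i = _ from dif_pos h]; rfl

lemma mix_apply (r : PMF (Fin n)) (φ : Fin n → PMF A) (j : Fin n) (b : A) :
    (r.bind fun i => (φ i).map fun a => (i, a)) (j, b) = r j * φ j b := by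
  rw [PMF.bind_apply, tsum_eq_single j]
  · congr 1
    rw [PMF.map_apply, tsum_eq_single b] <;> simp +contextual [Prod.ext_iff, eq_comm]
  · intro i hi
    simp [PMF.map_apply, Prod.ext_iff, hi.symm]

lemma fmass_mix (r : PMF (Fin n)) (φ : Fin n → PMF A) (j : Fin n) :
    fmass (r.bind fun i => (φ i).map fun a => (i, a)) j = r j := by
  simp only [fmass, mix_apply]
  rw [ENNReal.tsum_mul_left, (φ j).tsum_coe, mul_one]

lemma ncond_mix (r : PMF (Fin n)) (φ : Fin n → PMF A) (j : Fin n) (h : r j ≠ 0) :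
    ncond (r.bind fun i => (φ i).map fun a => (i, a)) j = φ j := by
  ext a
  rw [ncond_apply _ _ (by rwa [fmass_mix]), mix_apply, fmass_mix,
    mul_comm, div_eq_mul_inv, mul_assoc, ENNReal.mul_inv_cancel h (PMF.apply_ne_top r j), mul_one]

lemma decomp (ω : PMF (Fin n × A)) :
    (fstM ω).bind (fun i => (ncond ω i).map fun a => (i, a)) = ω := by
  ext ⟨j, a⟩
  rw [mix_apply, fstM_apply]
  by_cases h : fmass ω j = 0
  · rw [h, zero_mul]
    refine (le_antisymm ?_ zero_le).symm
    rw [← h]; exact ENNReal.le_tsum a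
  · rw [ncond_apply _ _ h, ENNReal.mul_div_cancel h (fmass_ne_top ω j)]

/-- equational characterisation of hyper normalisation: `N` satisfies
`N(Σ_i r(i)·D(κ_i)(φ(i))) = Σ_i r(i)·η(i, φ(i))` and is the unique such function. -/
theorem hnorm_unique (A : Type*) [Fintype A] [Nonempty A] (n : ℕ) :
    (∀ (r : PMF (Fin n)) (φ : Fin n → PMF A),
        hnorm (r.bind fun i => (φ i).map fun a => (i, a)) =
          r.bind fun i => PMF.pure (i, φ i)) ∧
    (∀ h : PMF (Fin n × A) → PMF (Fin n × PMF A),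
        (∀ (r : PMF (Fin n)) (φ : Fin n → PMF A),
          h (r.bind fun i => (φ i).map fun a => (i, a)) =
            r.bind fun i => PMF.pure (i, φ i)) →
        h = hnorm) := by
  have key : ∀ (r : PMF (Fin n)) (φ : Fin n → PMF A),
      hnorm (r.bind fun i => (φ i).map fun a => (i, a)) =
        r.bind fun i => PMF.pure (i, φ i) := by
    intro r φ
    ext ⟨j, q⟩
    rw [hnorm, PMF.bind_apply, PMF.bind_apply, tsum_eq_single j, tsum_eq_single j]
    · rw [fstM_apply, fmass_mix]
      by_cases h : r j = 0
      · simp [h]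
      · rw [ncond_mix r φ j h]
    · intro i hi; simp [PMF.pure_apply, Prod.ext_iff, hi.symm]
    · intro i hi; simp [PMF.pure_apply, Prod.ext_iff, hi.symm]
  refine ⟨key, fun h hh => ?_⟩
  funext ω
  have := hh (fstM ω) (ncond ω)
  rw [decomp ω] at this
  rw [this]; rfl

end HyperNorm
end
end

section
/- The test is recovered from the hyper conditional: for every ω ∈ D(A) and every n-test t : A → D(Fin n), (st₂)_*(ω‖t) = gr(t)_*(ω) in D(Fin n × A). Consequently, if ω(a) ≠ 0 for all a ∈ A, then for any two n-tests s, t : A → D(Fin n), ω‖s = ω‖t implies s = t. -/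
open scoped ENNReal

noncomputable section

namespace HyperNorm

variable {A B : Type*} {n m : ℕ}

lemma apply_le_fmass (ω : PMF (Fin n × A)) (i : Fin n) (a : A) : ω (i, a) ≤ fmass ω i :=
  ENNReal.le_tsum a

lemma hnorm_bind (ω : PMF (Fin n × A)) :
    (hnorm ω).bind (fun p => p.2.map fun a => (p.1, a)) = ω := by
  ext ⟨i, a⟩
  rw [hnorm, PMF.bind_bind]
  simp only [PMF.pure_bind]
  rw [PMF.bind_apply]
  have : ∀ j : Fin n,
      fstM ω j * ((ncond ω j).map fun a => (j, a)) (i, a) =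
        if j = i then fmass ω i * ncond ω i a else 0 := by
    intro j
    rw [PMF.map_apply]
    by_cases hj : j = i
    · subst hj
      simp only [if_true]
      congr 1
      rw [tsum_eq_single a]
      · simp
      · intro b hb; simp [Prod.ext_iff, hb.symm]
    · simp only [hj, if_false]
      rw [tsum_eq_single a]
      · simp [Prod.ext_iff, Ne.symm hj]
      · intro b hb; simp [Prod.ext_iff, hb.symm, Ne.symm hj]
  rw [tsum_congr this, tsum_eq_single i (by intro j hj; simp [hj]), if_pos rfl]
  by_cases h : fmass ω i = 0
  · rw [h, zero_mul]
    have := apply_le_fmass ω i a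
    rw [h] at this
    exact (le_zero_iff.mp this).symm
  · rw [show ncond ω i a = ω (i, a) / fmass ω i by simp [ncond, h]; rfl]
    rw [ENNReal.mul_div_cancel h (fmass_ne_top ω i)]

lemma bind_gr_apply (ω : PMF A) (t : A → PMF (Fin n)) (i : Fin n) (a : A) :
    (ω.bind (gr t)) (i, a) = ω a * t a i := by
  rw [PMF.bind_apply]
  rw [tsum_eq_single a]
  · congr 1
    rw [gr, PMF.map_apply, tsum_eq_single i]
    · simp
    · intro j hj; simp [Prod.ext_iff, Ne.symm hj]
  · intro b hb
    have : (gr t b) (i, a) = 0 := by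
      rw [gr, PMF.map_apply]
      apply ENNReal.tsum_eq_zero |>.mpr
      intro j
      simp [Prod.ext_iff, Ne.symm hb]
    rw [this, mul_zero]

/-- `(st₂)_*(ω‖t) = gr(t)_*(ω)`; consequently, if `ω` has full support
then the test is recovered from the hyper conditional: `ω‖s = ω‖t → s = t`. -/
theorem hypcond_recover_test {A : Type*} {n : ℕ} :
    (∀ (ω : PMF A) (t : A → PMF (Fin n)),
        (hnorm (ω.bind (gr t))).bind (fun p => p.2.map fun a => (p.1, a)) =
          ω.bind (gr t)) ∧
    (∀ ω : PMF A, (∀ a, ω a ≠ 0) →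
        ∀ s t : A → PMF (Fin n),
          hnorm (ω.bind (gr s)) = hnorm (ω.bind (gr t)) → s = t) := by
  refine ⟨fun ω t => hnorm_bind _, fun ω hω s t h => ?_⟩
  have hb : ω.bind (gr s) = ω.bind (gr t) := by
    rw [← hnorm_bind (ω.bind (gr s)), ← hnorm_bind (ω.bind (gr t)), h]
  funext a
  ext i
  have := congrArg (fun p => p (i, a)) hb
  simp only [bind_gr_apply] at this
  exact (ENNReal.mul_right_inj (hω a) (ω.apply_ne_top a)).mp this

end HyperNorm
end
end
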